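/- An element u of R is a unit if and only if u = ±(1 − G)^{a₀}(1 − E₁)^{a₁}(1 − E₂)^{a₂}(1 − E₃)^{a₃} for some a₀, a₁, a₂, a₃ ∈ {0, 1}; moreover these 32 elements are pairwise distinct, so the group of units of R has order exactly 32. (Under the dictionary of the paper, −(1 − G) = 1 − κ, so these correspond to the units ±(1 − κ)^{a₀}(1 − ε₁)^{a₁}(1 − ε₂)^{a₂}(1 − ε_⊕)^{a₃} of the equivariant cohomology ring of BT².) -/

import Mathlib

noncomputable section

open MvPolynomial

namespace BT2Deg0

def I0 : Ideal (MvPolynomial (Fin 4) ℤ) :=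
  Ideal.span
    { X 0 ^ 2 - 2 * X 0, X 0 * X 1, X 0 * X 2, X 0 * X 3,
      X 1 ^ 2 - 2 * X 1, X 2 ^ 2 - 2 * X 2, X 3 ^ 2 - 2 * X 3,
      X 1 * X 2 - 2 * X 3, X 1 * X 3 - 2 * X 3, X 2 * X 3 - 2 * X 3 }

/-- The ring `R`, which is the degree-zero part `H⁰_{C₂}(BT²₊)` of the
`RO(ΠBT²)`-graded `C₂`-equivariant ordinary cohomology of `BT²`. -/
abbrev R0 : Type := MvPolynomial (Fin 4) ℤ ⧸ I0

/-- `G`, corresponding to the class `g`. -/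
def G : R0 := Ideal.Quotient.mk I0 (X 0)

/-- `E₁`, corresponding to `ε₁ = e⁻²κ·ζ₀₀ζ₀₁c_{ω₁}`. -/
def E1 : R0 := Ideal.Quotient.mk I0 (X 1)

/-- `E₂`, corresponding to `ε₂ = e⁻²κ·ζ₀₀ζ₁₀c_{ω₂}`. -/
def E2 : R0 := Ideal.Quotient.mk I0 (X 2)

/-- `E₃`, corresponding to `ε_⊕ = e⁻⁴κ·ζ₀₀²ζ₀₁ζ₁₀c_{ω₁}c_{ω₂}`. -/
def E3 : R0 := Ideal.Quotient.mk I0 (X 3)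


/-- The signed product `±(1 − G)^{a₀}(1 − E₁)^{a₁}(1 − E₂)^{a₂}(1 − E₃)^{a₃}`
associated to a sign and exponents `a₀, a₁, a₂, a₃ ∈ {0, 1}`. -/
def signedUnit (t : Bool × Fin 2 × Fin 2 × Fin 2 × Fin 2) : R0 :=
  (if t.1 then 1 else -1) * (1 - G) ^ (t.2.1 : ℕ) * (1 - E1) ^ (t.2.2.1 : ℕ) *
    (1 - E2) ^ (t.2.2.2.1 : ℕ) * (1 - E3) ^ (t.2.2.2.2 : ℕ)

/-! ### Auxiliary material -/

lemma mk_eq_zero {p : MvPolynomial (Fin 4) ℤ} (h : p ∈ I0) :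
    Ideal.Quotient.mk I0 p = 0 := Ideal.Quotient.eq_zero_iff_mem.2 h

lemma rel {p q : MvPolynomial (Fin 4) ℤ} (h : p - q ∈ I0) :
    Ideal.Quotient.mk I0 p = Ideal.Quotient.mk I0 q := Ideal.Quotient.eq.2 h

lemma hGG : G * G = 2 * G := by
  have hm : (X 0 * X 0 - 2 * X 0 : MvPolynomial (Fin 4) ℤ) ∈ I0 := by
    have h : (X 0 * X 0 - 2 * X 0 : MvPolynomial (Fin 4) ℤ) = X 0 ^ 2 - 2 * X 0 := by ring
    rw [h]; exact Ideal.subset_span (by simp [I0])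
  have := rel hm
  simpa [G, map_mul, map_ofNat] using this

lemma hGE1 : G * E1 = 0 := by
  have := mk_eq_zero (Ideal.subset_span (show X 0 * X 1 ∈ _ by simp [I0]))
  simpa [G, E1, map_mul] using this

lemma hGE2 : G * E2 = 0 := by
  have := mk_eq_zero (Ideal.subset_span (show X 0 * X 2 ∈ _ by simp [I0]))
  simpa [G, E2, map_mul] using this

lemma hGE3 : G * E3 = 0 := by
  have := mk_eq_zero (Ideal.subset_span (show X 0 * X 3 ∈ _ by simp [I0]))
  simpa [G, E3, map_mul] using this

lemma hE11 : E1 * E1 = 2 * E1 := by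
  have hm : (X 1 * X 1 - 2 * X 1 : MvPolynomial (Fin 4) ℤ) ∈ I0 := by
    have h : (X 1 * X 1 - 2 * X 1 : MvPolynomial (Fin 4) ℤ) = X 1 ^ 2 - 2 * X 1 := by ring
    rw [h]; exact Ideal.subset_span (by simp [I0])
  have := rel hm
  simpa [E1, map_mul, map_ofNat] using this

lemma hE22 : E2 * E2 = 2 * E2 := by
  have hm : (X 2 * X 2 - 2 * X 2 : MvPolynomial (Fin 4) ℤ) ∈ I0 := by
    have h : (X 2 * X 2 - 2 * X 2 : MvPolynomial (Fin 4) ℤ) = X 2 ^ 2 - 2 * X 2 := by ring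
    rw [h]; exact Ideal.subset_span (by simp [I0])
  have := rel hm
  simpa [E2, map_mul, map_ofNat] using this

lemma hE33 : E3 * E3 = 2 * E3 := by
  have hm : (X 3 * X 3 - 2 * X 3 : MvPolynomial (Fin 4) ℤ) ∈ I0 := by
    have h : (X 3 * X 3 - 2 * X 3 : MvPolynomial (Fin 4) ℤ) = X 3 ^ 2 - 2 * X 3 := by ring
    rw [h]; exact Ideal.subset_span (by simp [I0])
  have := rel hm
  simpa [E3, map_mul, map_ofNat] using this

lemma hE12 : E1 * E2 = 2 * E3 := by
  have := rel (p := X 1 * X 2) (q := 2 * X 3) (Ideal.subset_span (by simp [I0]))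
  simpa [E1, E2, E3, map_mul, map_ofNat] using this

lemma hE13 : E1 * E3 = 2 * E3 := by
  have := rel (p := X 1 * X 3) (q := 2 * X 3) (Ideal.subset_span (by simp [I0]))
  simpa [E1, E3, map_mul, map_ofNat] using this

lemma hE23 : E2 * E3 = 2 * E3 := by
  have := rel (p := X 2 * X 3) (q := 2 * X 3) (Ideal.subset_span (by simp [I0]))
  simpa [E2, E3, map_mul, map_ofNat] using this

/-- Every element of `R0` is an integer combination of `1, G, E1, E2, E3`. -/
lemma repr (u : R0) :
    ∃ a b c d e : ℤ, u = (a : R0) + b * G + c * E1 + d * E2 + e * E3 := by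
  obtain ⟨p, rfl⟩ := Ideal.Quotient.mk_surjective u
  induction p using MvPolynomial.induction_on with
  | C a =>
      refine ⟨a, 0, 0, 0, 0, ?_⟩
      push_cast
      simp [map_intCast]
  | add p q hp hq =>
      obtain ⟨a, b, c, d, e, hp⟩ := hp
      obtain ⟨a', b', c', d', e', hq⟩ := hq
      refine ⟨a + a', b + b', c + c', d + d', e + e', ?_⟩
      rw [map_add, hp, hq]; push_cast; ring
  | mul_X p i hp =>
      obtain ⟨a, b, c, d, e, hp⟩ := hp
      rw [map_mul, hp]
      fin_cases i
      · refine ⟨0, a + 2 * b, 0, 0, 0, ?_⟩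
        show _ * G = _
        push_cast
        linear_combination (b : R0) * hGG + (c : R0) * hGE1 + (d : R0) * hGE2 +
          (e : R0) * hGE3
      · refine ⟨0, 0, a + 2 * c, 0, 2 * d + 2 * e, ?_⟩
        show _ * E1 = _
        push_cast
        linear_combination (b : R0) * hGE1 + (c : R0) * hE11 + (d : R0) * hE12 +
          (e : R0) * hE13
      · refine ⟨0, 0, 0, a + 2 * d, 2 * c + 2 * e, ?_⟩
        show _ * E2 = _
        push_cast
        linear_combination (b : R0) * hGE2 + (d : R0) * hE22 + (c : R0) * hE12 +
          (e : R0) * hE23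
      · refine ⟨0, 0, 0, 0, a + 2 * c + 2 * d + 2 * e, ?_⟩
        show _ * E3 = _
        push_cast
        linear_combination (b : R0) * hGE3 + (c : R0) * hE13 + (d : R0) * hE23 +
          (e : R0) * hE33

/-- The five `ℤ`-points of `R0`. -/
def pts : Fin 5 → Fin 4 → ℤ :=
  ![![0,0,0,0], ![2,0,0,0], ![0,2,0,0], ![0,0,2,0], ![0,2,2,2]]

def ev : MvPolynomial (Fin 4) ℤ →+* (Fin 5 → ℤ) :=
  RingHom.pi fun i => eval (pts i)

lemma ev_vanish : ∀ p ∈ I0, ev p = 0 := by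
  intro p hp
  have : I0 ≤ RingHom.ker ev := by
    rw [I0, Ideal.span_le]
    intro q hq
    simp only [Set.mem_insert_iff, Set.mem_singleton_iff] at hq
    rcases hq with rfl|rfl|rfl|rfl|rfl|rfl|rfl|rfl|rfl|rfl <;>
      · funext i
        fin_cases i <;> simp [ev, pts, RingHom.pi_apply]
  exact this hp

/-- Evaluation of `R0` at its five `ℤ`-points. -/
def Φ : R0 →+* (Fin 5 → ℤ) := Ideal.Quotient.lift I0 ev ev_vanish

lemma ΦG : Φ G = ![0,2,0,0,0] := by
  funext i; fin_cases i <;> simp [Φ, G, ev, pts, RingHom.pi_apply]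
lemma ΦE1 : Φ E1 = ![0,0,2,0,2] := by
  funext i; fin_cases i <;> simp [Φ, E1, ev, pts, RingHom.pi_apply]
lemma ΦE2 : Φ E2 = ![0,0,0,2,2] := by
  funext i; fin_cases i <;> simp [Φ, E2, ev, pts, RingHom.pi_apply]
lemma ΦE3 : Φ E3 = ![0,0,0,0,2] := by
  funext i; fin_cases i <;> simp [Φ, E3, ev, pts, RingHom.pi_apply]

lemma Φ_injective : Function.Injective Φ := by
  rw [injective_iff_map_eq_zero]
  intro u hu
  obtain ⟨a, b, c, d, e, rfl⟩ := repr u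
  have hcoord : ∀ i : Fin 5,
      a + b * Φ G i + c * Φ E1 i + d * Φ E2 i + e * Φ E3 i = 0 := by
    intro i
    have := congrFun hu i
    simpa [map_add, map_mul, map_intCast, Pi.add_apply, Pi.mul_apply] using this
  have h0 := hcoord 0
  have h1 := hcoord 1
  have h2 := hcoord 2
  have h3 := hcoord 3
  have h4 := hcoord 4
  rw [ΦG, ΦE1, ΦE2, ΦE3] at h0 h1 h2 h3 h4
  simp [Matrix.cons_val_zero, Matrix.cons_val_one] at h0 h1 h2 h3 h4
  have ha : a = 0 := by omega
  have hb : b = 0 := by omega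
  have hc : c = 0 := by omega
  have hd : d = 0 := by omega
  have he : e = 0 := by omega
  subst ha hb hc hd he
  simp

/-- The sign vector of `signedUnit t` under `Φ`. -/
def σ (t : Bool × Fin 2 × Fin 2 × Fin 2 × Fin 2) : Fin 5 → ℤ :=
  fun i =>
    (if t.1 then 1 else -1) *
      ![1, if t.2.1 = 0 then 1 else -1, if t.2.2.1 = 0 then 1 else -1,
        if t.2.2.2.1 = 0 then 1 else -1,
        (if t.2.2.1 = 0 then (1:ℤ) else -1) * (if t.2.2.2.1 = 0 then 1 else -1) *
          (if t.2.2.2.2 = 0 then 1 else -1)] i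

lemma Φ_signedUnit (t : Bool × Fin 2 × Fin 2 × Fin 2 × Fin 2) :
    Φ (signedUnit t) = σ t := by
  obtain ⟨b, a0, a1, a2, a3⟩ := t
  have hb : Φ (if b then (1 : R0) else -1) = fun _ => if b then (1:ℤ) else -1 := by
    cases b <;> simp <;> rfl
  funext i
  simp only [signedUnit, map_mul, map_pow, map_sub, map_one, hb, ΦG, ΦE1, ΦE2, ΦE3, σ,
    Pi.mul_apply, Pi.pow_apply, Pi.sub_apply, Pi.one_apply]
  fin_cases a0 <;> fin_cases a1 <;> fin_cases a2 <;> fin_cases a3 <;>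
    fin_cases i <;> cases b <;> norm_num

lemma σ_injective : Function.Injective σ := by decide

lemma cover : ∀ f : Fin 5 → Bool, ∃ t, σ t = (fun i => if f i then (1:ℤ) else -1) := by
  decide

lemma signedUnit_sq (t : Bool × Fin 2 × Fin 2 × Fin 2 × Fin 2) :
    signedUnit t * signedUnit t = 1 := by
  obtain ⟨b, a0, a1, a2, a3⟩ := t
  have e2 : ((if b then (1:R0) else -1) * (if b then 1 else -1)) = 1 := by
    cases b <;> norm_num
  have g2 : (1 - G) * (1 - G) = 1 := by linear_combination hGG
  have f1 : (1 - E1) * (1 - E1) = 1 := by linear_combination hE11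
  have f2 : (1 - E2) * (1 - E2) = 1 := by linear_combination hE22
  have f3 : (1 - E3) * (1 - E3) = 1 := by linear_combination hE33
  have expand : signedUnit (b, a0, a1, a2, a3) * signedUnit (b, a0, a1, a2, a3) =
      ((if b then (1:R0) else -1) * (if b then 1 else -1)) *
        ((1 - G) * (1 - G)) ^ (a0 : ℕ) * ((1 - E1) * (1 - E1)) ^ (a1 : ℕ) *
        ((1 - E2) * (1 - E2)) ^ (a2 : ℕ) * ((1 - E3) * (1 - E3)) ^ (a3 : ℕ) := by
    simp only [signedUnit, mul_pow]
    ring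
  rw [expand, e2, g2, f1, f2, f3]
  simp

lemma isUnit_iff_aux (u : R0) :
    IsUnit u ↔ ∃ t : Bool × Fin 2 × Fin 2 × Fin 2 × Fin 2, u = signedUnit t := by
  constructor
  · intro hu
    have hΦu : IsUnit (Φ u) := hu.map Φ
    have hcoord : ∀ i : Fin 5, Φ u i = 1 ∨ Φ u i = -1 := by
      intro i
      have : IsUnit (Φ u i) := hΦu.map (Pi.evalRingHom (fun _ => ℤ) i)
      exact Int.isUnit_iff.1 this
    have hform : Φ u = fun i => if (Φ u i = 1 : Prop) then (1:ℤ) else -1 := by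
      funext i
      rcases hcoord i with h | h <;> simp [h]
    obtain ⟨t, ht⟩ := cover (fun i => decide (Φ u i = 1))
    refine ⟨t, Φ_injective ?_⟩
    rw [Φ_signedUnit, ht, hform]
    funext i
    by_cases h : Φ u i = 1 <;> simp [h]
  · rintro ⟨t, rfl⟩
    exact IsUnit.of_mul_eq_one _ (signedUnit_sq t)

lemma signedUnit_injective : Function.Injective signedUnit := by
  intro t1 t2 h
  apply σ_injective
  rw [← Φ_signedUnit, ← Φ_signedUnit, h]

/-- An element `u` of `R` is a unit if and only if
`u = ±(1 − G)^{a₀}(1 − E₁)^{a₁}(1 − E₂)^{a₂}(1 − E₃)^{a₃}` with each `aᵢ ∈ {0, 1}`;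
these 32 elements are pairwise distinct, so `R` has exactly 32 units. -/
theorem units_R0 :
    (∀ u : R0, IsUnit u ↔ ∃ t : Bool × Fin 2 × Fin 2 × Fin 2 × Fin 2, u = signedUnit t) ∧
    Function.Injective signedUnit ∧
    Nat.card R0ˣ = 32 := by
  refine ⟨isUnit_iff_aux, signedUnit_injective, ?_⟩
  have bij : Function.Bijective
      (fun t : Bool × Fin 2 × Fin 2 × Fin 2 × Fin 2 =>
        (⟨signedUnit t, signedUnit t, signedUnit_sq t, signedUnit_sq t⟩ : R0ˣ)) := by
    constructor
    · intro t1 t2 h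
      exact signedUnit_injective (congrArg Units.val h)
    · intro u
      obtain ⟨t, ht⟩ := (isUnit_iff_aux (u : R0)).1 u.isUnit
      exact ⟨t, Units.ext ht.symm⟩
  have := Nat.card_eq_of_bijective _ bij
  rw [← this]
  simp [Nat.card_eq_fintype_card]


end BT2Deg0

end
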